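/- Let $\mathcal{T} \times \mathcal{T}$ denote the set of dyadic rectangles $R = I \times J$ with $I, J$ dyadic subintervals of $[0,1)$. For $A > 0$ large enough, define $m(R, R') = (|R|/|R'|)^A$ if $R \subseteq R'$, $m(R,R') = (|R'|/|R|)^A$ if $R' \subsetneq R$, and $0$ if neither rectangle contains the other (where containment means containment of both coordinate intervals). Then the matrix $m$ defines a bounded operator on $\ell^2(\mathcal{T} \times \mathcal{T})$ provided $A$ is sufficiently large. -/

import Mathlib

open scoped Classical

/-- A dyadic subinterval `[k 2^(-n), (k+1) 2^(-n))` of `[0,1)`. -/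
structure UDI where
  n : ℕ
  k : ℕ
  hk : k < 2 ^ n

namespace UDI

/-- The length `|I| = 2^(-n)`. -/
noncomputable def len (I : UDI) : ℝ := (2:ℝ) ^ (-(I.n : ℤ))

/-- The underlying interval. -/
noncomputable def set (I : UDI) : Set ℝ := Set.Ico ((I.k : ℝ) * I.len) (((I.k : ℝ) + 1) * I.len)

/-- Containment of dyadic intervals. -/
def Sub (I J : UDI) : Prop := I.set ⊆ J.set

end UDI

/-- The area `|R| = |I|·|J|` of a dyadic rectangle `R = I × J`. -/
noncomputable def area (R : UDI × UDI) : ℝ := R.1.len * R.2.len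

/-- Containment of dyadic rectangles: containment of both coordinate intervals. -/
def SubR (R R' : UDI × UDI) : Prop := UDI.Sub R.1 R'.1 ∧ UDI.Sub R.2 R'.2

/-- The Schur matrix on the bi-tree: `m(R,R') = (|R|/|R'|)^A` if `R ⊆ R'`,
`(|R'|/|R|)^A` if `R' ⊊ R`, and `0` if neither contains the other. -/
noncomputable def schurMatR (A : ℝ) (R R' : UDI × UDI) : ℝ :=
  if SubR R R' then (area R / area R') ^ A
  else if SubR R' R then (area R' / area R) ^ A
  else 0

open scoped ENNReal NNReal

namespace UDI

lemma len_pos (I : UDI) : 0 < I.len := zpow_pos two_pos _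

lemma sub_real (I J : UDI) (h : Sub I J) :
    (J.k : ℝ) * J.len ≤ (I.k : ℝ) * I.len ∧ ((I.k:ℝ)+1) * I.len ≤ ((J.k:ℝ)+1) * J.len := by
  have hlt : (I.k : ℝ) * I.len < ((I.k:ℝ)+1) * I.len := by
    have := I.len_pos; nlinarith
  exact (Set.Ico_subset_Ico_iff hlt).1 h

lemma len_le_of_sub {I J : UDI} (h : Sub I J) : I.len ≤ J.len := by
  obtain ⟨h1, h2⟩ := sub_real I J h
  nlinarith [I.len_pos, J.len_pos]

lemma n_le_of_sub {I J : UDI} (h : Sub I J) : J.n ≤ I.n := by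
  have := len_le_of_sub h
  unfold len at this
  have : -(I.n : ℤ) ≤ -(J.n : ℤ) := by
    exact_mod_cast (zpow_le_zpow_iff_right₀ (by norm_num : (1:ℝ) < 2)).1 this
  omega

lemma k_bounds_of_sub {I J : UDI} (h : Sub I J) :
    J.k * 2 ^ (I.n - J.n) ≤ I.k ∧ I.k < (J.k + 1) * 2 ^ (I.n - J.n) := by
  have hn := n_le_of_sub h
  obtain ⟨h1, h2⟩ := sub_real I J h
  have hd : ((2:ℝ) ^ (I.n - J.n) : ℝ) = J.len / I.len := by
    unfold len
    rw [← zpow_natCast, ← zpow_sub₀ (by norm_num : (2:ℝ) ≠ 0)]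
    congr 1
    push_cast [hn]
    ring
  have hIp := I.len_pos
  constructor
  · have : (J.k : ℝ) * 2 ^ (I.n - J.n) ≤ I.k := by
      rw [hd, div_eq_mul_inv]
      calc (J.k:ℝ) * (J.len * I.len⁻¹) = (J.k * J.len) * I.len⁻¹ := by ring
        _ ≤ (I.k * I.len) * I.len⁻¹ := by
            apply mul_le_mul_of_nonneg_right h1 (by positivity)
        _ = I.k := by field_simp
    exact_mod_cast this
  · have : (I.k : ℝ) + 1 ≤ (J.k + 1) * 2 ^ (I.n - J.n) := by
      rw [hd]
      calc (I.k:ℝ) + 1 = (((I.k:ℝ)+1) * I.len) * I.len⁻¹ := by field_simp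
        _ ≤ (((J.k:ℝ)+1) * J.len) * I.len⁻¹ := by
            apply mul_le_mul_of_nonneg_right h2 (by positivity)
        _ = ((J.k:ℝ)+1) * (J.len / I.len) := by ring
    have : (I.k : ℝ) < (J.k + 1) * 2 ^ (I.n - J.n) := by push_cast at this ⊢; linarith
    exact_mod_cast this

lemma k_eq_of_sub {I J : UDI} (h : Sub I J) : J.k = I.k / 2 ^ (I.n - J.n) :=
  (Nat.div_eq_of_lt_le (k_bounds_of_sub h).1 (k_bounds_of_sub h).2).symm

lemma len_div_of_sub {I J : UDI} (h : Sub I J) :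
    I.len / J.len = (2:ℝ) ^ (-((I.n - J.n : ℕ) : ℝ)) := by
  have hn := n_le_of_sub h
  unfold len
  rw [← Real.rpow_intCast 2 (-(I.n:ℤ)), ← Real.rpow_intCast 2 (-(J.n:ℤ)),
    ← Real.rpow_sub two_pos]
  congr 1
  push_cast [hn]
  ring

end UDI


noncomputable def g (A : ℝ) (I I' : UDI) : ℝ :=
  if UDI.Sub I I' then (I.len / I'.len) ^ A
  else if UDI.Sub I' I then (I'.len / I.len) ^ A else 0

lemma g_nonneg (A : ℝ) (I I' : UDI) : 0 ≤ g A I I' := by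
  unfold g
  have h1 := I.len_pos; have h2 := I'.len_pos
  split_ifs <;>
    first
      | exact Real.rpow_nonneg (by positivity) _
      | exact le_refl 0

lemma rpow_val {j : ℕ} {A : ℝ} (x : ℝ) (hx : x = (2:ℝ) ^ (-(j:ℝ))) :
    x ^ A = (2:ℝ) ^ (-(j:ℝ) * A) := by
  rw [hx, ← Real.rpow_mul (by norm_num : (0:ℝ) ≤ 2)]

lemma half_pow_eq (j : ℕ) : ((1/2 : ℝ)) ^ j = (2:ℝ) ^ (-(j:ℝ)) := by
  rw [Real.rpow_neg (by norm_num), Real.rpow_natCast]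
  simp [one_div, inv_pow]

lemma val_le_half (j : ℕ) {A : ℝ} (hA : 2 ≤ A) :
    (2:ℝ) ^ (-(j:ℝ) * A) ≤ (1/2:ℝ) ^ j := by
  rw [half_pow_eq]
  apply Real.rpow_le_rpow_of_exponent_le one_le_two
  have : (0:ℝ) ≤ (j:ℝ) := Nat.cast_nonneg j
  nlinarith

lemma two_pow_val_le_half (j : ℕ) {A : ℝ} (hA : 2 ≤ A) :
    (2:ℝ) ^ j * (2:ℝ) ^ (-(j:ℝ) * A) ≤ (1/2:ℝ) ^ j := by
  rw [half_pow_eq, ← Real.rpow_natCast 2 j, ← Real.rpow_add (by norm_num)]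
  apply Real.rpow_le_rpow_of_exponent_le one_le_two
  have : (0:ℝ) ≤ (j:ℝ) := Nat.cast_nonneg j
  nlinarith

open ENNReal in
lemma half_geom : ∑' j : ℕ, ENNReal.ofReal ((1/2:ℝ)^j) = 2 := by
  have h : ∀ j : ℕ, ENNReal.ofReal ((1/2:ℝ)^j) = (2⁻¹ : ℝ≥0∞)^j := by
    intro j
    rw [ENNReal.ofReal_pow (by norm_num)]
    congr 1
    rw [one_div, ENNReal.ofReal_inv_of_pos (by norm_num)]
    norm_num
  rw [tsum_congr h, ENNReal.tsum_geometric, ENNReal.one_sub_inv_two, inv_inv]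

lemma tail4 (n : ℕ) :
    (∑' m : ℕ, (if m ≤ n then ENNReal.ofReal ((1/2:ℝ) ^ (n - m))
      else ENNReal.ofReal ((1/2:ℝ) ^ (m - n)))) ≤ 4 := by
  have hsplit : ∀ m : ℕ,
      (if m ≤ n then ENNReal.ofReal ((1/2:ℝ) ^ (n - m))
        else ENNReal.ofReal ((1/2:ℝ) ^ (m - n)))
      = (if m ≤ n then ENNReal.ofReal ((1/2:ℝ) ^ (n - m)) else 0)
        + (if n < m then ENNReal.ofReal ((1/2:ℝ) ^ (m - n)) else 0) := by
    intro m
    by_cases hm : m ≤ n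
    · rw [if_pos hm, if_pos hm, if_neg (by omega), add_zero]
    · rw [if_neg hm, if_neg hm, if_pos (by omega), zero_add]
  rw [tsum_congr hsplit, ENNReal.tsum_add]
  have h1 : (∑' m : ℕ, (if m ≤ n then ENNReal.ofReal ((1/2:ℝ) ^ (n - m)) else 0)) ≤ 2 := by
    rw [tsum_eq_sum (s := Finset.range (n + 1))
      (by intro m hm; rw [Finset.mem_range] at hm; rw [if_neg (by omega)])]
    have heq : ∀ m ∈ Finset.range (n + 1),
        (if m ≤ n then ENNReal.ofReal ((1/2:ℝ) ^ (n - m)) else 0)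
        = ENNReal.ofReal ((1/2:ℝ) ^ (n - m)) := by
      intro m hm
      rw [Finset.mem_range] at hm
      rw [if_pos (by omega)]
    rw [Finset.sum_congr rfl heq]
    have hrefl := Finset.sum_range_reflect
      (fun j => ENNReal.ofReal ((1/2:ℝ) ^ j)) (n + 1)
    simp only [Nat.add_sub_cancel] at hrefl
    calc ∑ m ∈ Finset.range (n + 1), ENNReal.ofReal ((1/2:ℝ) ^ (n - m))
        = ∑ j ∈ Finset.range (n + 1), ENNReal.ofReal ((1/2:ℝ) ^ j) := by rw [← hrefl]
      _ ≤ ∑' j : ℕ, ENNReal.ofReal ((1/2:ℝ) ^ j) := ENNReal.sum_le_tsum _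
      _ = 2 := half_geom
  have h2 : (∑' m : ℕ, (if n < m then ENNReal.ofReal ((1/2:ℝ) ^ (m - n)) else 0)) ≤ 2 := by
    have hinj : Function.Injective (fun j : ℕ => j + (n + 1)) := fun a b h => Nat.add_right_cancel h
    have hsupp : Function.support
        (fun m : ℕ => (if n < m then ENNReal.ofReal ((1/2:ℝ) ^ (m - n)) else 0))
        ⊆ Set.range (fun j : ℕ => j + (n + 1)) := by
      intro m hm
      simp only [Function.mem_support] at hm
      by_cases h : n < m
      · exact ⟨m - (n + 1), show m - (n + 1) + (n + 1) = m by omega⟩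
      · simp [if_neg h] at hm
    rw [← hinj.tsum_eq hsupp]
    have hle : ∀ j : ℕ,
        (if n < j + (n + 1) then ENNReal.ofReal ((1/2:ℝ) ^ (j + (n + 1) - n)) else 0)
        ≤ ENNReal.ofReal ((1/2:ℝ) ^ j) := by
      intro j
      rw [if_pos (by omega)]
      apply ENNReal.ofReal_le_ofReal
      apply pow_le_pow_of_le_one (by norm_num) (by norm_num)
      omega
    calc _ ≤ ∑' j : ℕ, ENNReal.ofReal ((1/2:ℝ) ^ j) := ENNReal.tsum_le_tsum hle
      _ = 2 := half_geom
  calc _ ≤ (2 : ℝ≥0∞) + 2 := add_le_add h1 h2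
    _ = 4 := by norm_num

lemma g_row {A : ℝ} (hA : 2 ≤ A) (I : UDI) :
    ∑' I' : UDI, ENNReal.ofReal (g A I I') ≤ 4 := by
  classical
  set G : ℕ × ℕ → ℝ≥0∞ := fun p =>
    if p.1 ≤ I.n then
      (if p.2 = I.k / 2 ^ (I.n - p.1) then
        ENNReal.ofReal ((2:ℝ) ^ (-(((I.n - p.1) : ℕ) : ℝ) * A)) else 0)
    else
      (if I.k * 2 ^ (p.1 - I.n) ≤ p.2 ∧ p.2 < (I.k + 1) * 2 ^ (p.1 - I.n) then
        ENNReal.ofReal ((2:ℝ) ^ (-(((p.1 - I.n) : ℕ) : ℝ) * A)) else 0) with hG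
  have hpoint : ∀ I' : UDI, ENNReal.ofReal (g A I I') ≤ G (I'.n, I'.k) := by
    intro I'
    unfold g
    split_ifs with h1 h2
    · have hn := UDI.n_le_of_sub h1
      have hk := UDI.k_eq_of_sub h1
      have hval : (I.len / I'.len) ^ A = (2:ℝ) ^ (-(((I.n - I'.n) : ℕ) : ℝ) * A) :=
        rpow_val _ (UDI.len_div_of_sub h1)
      simp only [hG, hval, if_pos hn, if_pos hk]
      exact le_refl _
    · have hn : I.n ≤ I'.n := UDI.n_le_of_sub h2
      have hb := UDI.k_bounds_of_sub h2
      by_cases hmn : I'.n ≤ I.n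
      · have heq : I'.n = I.n := le_antisymm hmn hn
        have hkk : I'.k = I.k := by
          have h0 : I'.n - I.n = 0 := by omega
          rw [h0, pow_zero, mul_one, mul_one] at hb
          omega
        have hcond : I'.k = I.k / 2 ^ (I.n - I'.n) := by
          rw [heq, Nat.sub_self, pow_zero, Nat.div_one, hkk]
        have hlen : I'.len = I.len := by unfold UDI.len; rw [heq]
        have hval : (I'.len / I.len) ^ A = 1 := by
          rw [hlen, div_self (ne_of_gt I.len_pos), Real.one_rpow]
        have hval2 : (2:ℝ) ^ (-(((I.n - I'.n) : ℕ) : ℝ) * A) = 1 := by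
          rw [heq, Nat.sub_self]
          norm_num
        simp only [hG, hval, if_pos hmn, if_pos hcond, hval2]
        exact le_refl _
      · have hval : (I'.len / I.len) ^ A = (2:ℝ) ^ (-(((I'.n - I.n) : ℕ) : ℝ) * A) :=
          rpow_val _ (UDI.len_div_of_sub h2)
        simp only [hG, hval, if_neg hmn, if_pos hb]
        exact le_refl _
    · simp only [ENNReal.ofReal_zero, zero_le]
  have hinj : Function.Injective (fun I' : UDI => (I'.n, I'.k)) := by
    rintro ⟨n1, k1, hk1⟩ ⟨n2, k2, hk2⟩ h
    simp only [Prod.mk.injEq] at h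
    obtain ⟨rfl, rfl⟩ := h
    rfl
  have hinner : ∀ m : ℕ, (∑' k : ℕ, G (m, k)) ≤
      (if m ≤ I.n then ENNReal.ofReal ((1/2:ℝ) ^ (I.n - m))
       else ENNReal.ofReal ((1/2:ℝ) ^ (m - I.n))) := by
    intro m
    by_cases hm : m ≤ I.n
    · rw [if_pos hm]
      have : ∀ k : ℕ, G (m, k) =
          if k = I.k / 2 ^ (I.n - m) then
            ENNReal.ofReal ((2:ℝ) ^ (-(((I.n - m) : ℕ) : ℝ) * A)) else 0 := by
        intro k; simp only [hG, if_pos hm]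
      rw [tsum_congr this, tsum_ite_eq]
      exact ENNReal.ofReal_le_ofReal (val_le_half _ hA)
    · rw [if_neg hm]
      set d := m - I.n with hd
      set v := ENNReal.ofReal ((2:ℝ) ^ (-((d : ℕ) : ℝ) * A)) with hv
      have hGmk : ∀ k : ℕ, G (m, k) =
          if I.k * 2 ^ d ≤ k ∧ k < (I.k + 1) * 2 ^ d then v else 0 := by
        intro k; simp only [hG, if_neg hm]; rfl
      rw [tsum_congr hGmk]
      have hsum : (∑' k : ℕ, if I.k * 2 ^ d ≤ k ∧ k < (I.k + 1) * 2 ^ d then v else 0)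
          = ∑ k ∈ Finset.Ico (I.k * 2 ^ d) ((I.k + 1) * 2 ^ d),
              (if I.k * 2 ^ d ≤ k ∧ k < (I.k + 1) * 2 ^ d then v else 0) := by
        apply tsum_eq_sum
        intro k hk
        rw [Finset.mem_Ico] at hk
        rw [if_neg (by omega)]
      rw [hsum]
      have : ∀ k ∈ Finset.Ico (I.k * 2 ^ d) ((I.k + 1) * 2 ^ d),
          (if I.k * 2 ^ d ≤ k ∧ k < (I.k + 1) * 2 ^ d then v else 0) = v := by
        intro k hk
        rw [Finset.mem_Ico] at hk
        rw [if_pos hk]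
      rw [Finset.sum_congr rfl this, Finset.sum_const, Nat.card_Ico]
      have hcard : (I.k + 1) * 2 ^ d - I.k * 2 ^ d = 2 ^ d := by
        have h := Nat.succ_mul I.k (2 ^ d)
        rw [h, Nat.add_sub_cancel_left]
      rw [hcard, nsmul_eq_mul, hv]
      have hcast : ((2 ^ d : ℕ) : ℝ≥0∞) = ENNReal.ofReal ((2:ℝ) ^ d) := by
        rw [← ENNReal.ofReal_natCast (2 ^ d)]
        congr 1
        push_cast
        ring
      rw [hcast, ← ENNReal.ofReal_mul (by positivity)]
      exact ENNReal.ofReal_le_ofReal (two_pow_val_le_half _ hA)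
  calc ∑' I' : UDI, ENNReal.ofReal (g A I I')
      ≤ ∑' I' : UDI, G (I'.n, I'.k) := ENNReal.tsum_le_tsum hpoint
    _ ≤ ∑' p : ℕ × ℕ, G p := ENNReal.tsum_comp_le_tsum_of_injective hinj G
    _ = ∑' m : ℕ, ∑' k : ℕ, G (m, k) := ENNReal.tsum_prod'
    _ ≤ ∑' m : ℕ, (if m ≤ I.n then ENNReal.ofReal ((1/2:ℝ) ^ (I.n - m))
         else ENNReal.ofReal ((1/2:ℝ) ^ (m - I.n))) := ENNReal.tsum_le_tsum hinner
    _ ≤ 4 := tail4 I.n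

lemma area_pos (R : UDI × UDI) : 0 < area R := mul_pos R.1.len_pos R.2.len_pos

lemma schur_nonneg (A : ℝ) (R R' : UDI × UDI) : 0 ≤ schurMatR A R R' := by
  unfold schurMatR
  have := area_pos R; have := area_pos R'
  split_ifs <;> first
    | exact Real.rpow_nonneg (by positivity) _
    | exact le_refl 0

lemma schur_le_one {A : ℝ} (hA : 0 ≤ A) (R R' : UDI × UDI) : schurMatR A R R' ≤ 1 := by
  have h1 := area_pos R; have h2 := area_pos R'
  have key : ∀ S S' : UDI × UDI, SubR S S' → area S / area S' ≤ 1 := by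
    rintro S S' ⟨ha, hb⟩
    rw [div_le_one (area_pos S')]
    exact mul_le_mul (UDI.len_le_of_sub ha) (UDI.len_le_of_sub hb)
      S.2.len_pos.le S'.1.len_pos.le
  unfold schurMatR
  split_ifs with hs hs'
  · exact Real.rpow_le_one (by positivity) (key _ _ hs) hA
  · exact Real.rpow_le_one (by positivity) (key _ _ hs') hA
  · norm_num

lemma schur_symm (A : ℝ) (R R' : UDI × UDI) : schurMatR A R R' = schurMatR A R' R := by
  unfold schurMatR
  by_cases h1 : SubR R R'
  · by_cases h2 : SubR R' R
    · rw [if_pos h1, if_pos h2]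
      have e1 : R.1.len = R'.1.len :=
        le_antisymm (UDI.len_le_of_sub h1.1) (UDI.len_le_of_sub h2.1)
      have e2 : R.2.len = R'.2.len :=
        le_antisymm (UDI.len_le_of_sub h1.2) (UDI.len_le_of_sub h2.2)
      unfold area
      rw [e1, e2]
    · rw [if_pos h1, if_neg h2, if_pos h1]
  · by_cases h2 : SubR R' R
    · rw [if_neg h1, if_pos h2, if_pos h2]
    · rw [if_neg h1, if_neg h2, if_neg h2, if_neg h1]

lemma g_of_sub {A : ℝ} {I I' : UDI} (h : UDI.Sub I I') : g A I I' = (I.len / I'.len) ^ A :=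
  if_pos h

lemma g_of_sub' {A : ℝ} {I I' : UDI} (h' : UDI.Sub I' I) : g A I I' = (I'.len / I.len) ^ A := by
  unfold g
  split_ifs with h1
  · have e : I.len = I'.len := le_antisymm (UDI.len_le_of_sub h1) (UDI.len_le_of_sub h')
    rw [e]
  · rfl

lemma schur_le_prod (A : ℝ) (R R' : UDI × UDI) :
    schurMatR A R R' ≤ g A R.1 R'.1 * g A R.2 R'.2 := by
  unfold schurMatR
  have p1 := R.1.len_pos; have p2 := R.2.len_pos
  have q1 := R'.1.len_pos; have q2 := R'.2.len_pos
  split_ifs with h1 h2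
  · rw [g_of_sub h1.1, g_of_sub h1.2, ← Real.mul_rpow (by positivity) (by positivity)]
    apply le_of_eq
    congr 1
    unfold area
    rw [div_mul_div_comm]
  · rw [g_of_sub' h2.1, g_of_sub' h2.2, ← Real.mul_rpow (by positivity) (by positivity)]
    apply le_of_eq
    congr 1
    unfold area
    rw [div_mul_div_comm]
  · exact mul_nonneg (g_nonneg _ _ _) (g_nonneg _ _ _)

lemma schur_row_ennreal {A : ℝ} (hA : 2 ≤ A) (R : UDI × UDI) :
    ∑' R' : UDI × UDI, ENNReal.ofReal (schurMatR A R R') ≤ 16 := by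
  calc ∑' R' : UDI × UDI, ENNReal.ofReal (schurMatR A R R')
      ≤ ∑' R' : UDI × UDI, ENNReal.ofReal (g A R.1 R'.1) * ENNReal.ofReal (g A R.2 R'.2) := by
        apply ENNReal.tsum_le_tsum
        intro R'
        rw [← ENNReal.ofReal_mul (g_nonneg _ _ _)]
        exact ENNReal.ofReal_le_ofReal (schur_le_prod A R R')
    _ = (∑' I' : UDI, ENNReal.ofReal (g A R.1 I')) *
        (∑' J' : UDI, ENNReal.ofReal (g A R.2 J')) := by
        rw [ENNReal.tsum_prod']
        calc ∑' (I' : UDI) (J' : UDI), ENNReal.ofReal (g A R.1 I') * ENNReal.ofReal (g A R.2 J')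
            = ∑' I' : UDI, ENNReal.ofReal (g A R.1 I') *
                (∑' J' : UDI, ENNReal.ofReal (g A R.2 J')) := by
              apply tsum_congr
              intro I'
              rw [ENNReal.tsum_mul_left]
          _ = _ := ENNReal.tsum_mul_right
    _ ≤ 4 * 4 := mul_le_mul' (g_row hA R.1) (g_row hA R.2)
    _ = 16 := by norm_num

lemma tsum_cs {ι : Type*} {f h : ι → ℝ} (hf : ∀ i, 0 ≤ f i) (hh : ∀ i, 0 ≤ h i)
    (sf : Summable fun i => f i ^ 2) (sh : Summable fun i => h i ^ 2)
    (sfh : Summable fun i => f i * h i) :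
    (∑' i, f i * h i) ^ 2 ≤ (∑' i, f i ^ 2) * (∑' i, h i ^ 2) := by
  have hM0 : 0 ≤ (∑' i, f i ^ 2) * (∑' i, h i ^ 2) := by
    apply mul_nonneg <;> exact tsum_nonneg (fun i => sq_nonneg _)
  have key : ∀ s : Finset ι, (∑ i ∈ s, f i * h i) ≤
      Real.sqrt ((∑' i, f i ^ 2) * (∑' i, h i ^ 2)) := by
    intro s
    rw [Real.le_sqrt (Finset.sum_nonneg fun i _ => mul_nonneg (hf i) (hh i)) hM0]
    calc (∑ i ∈ s, f i * h i) ^ 2 ≤ (∑ i ∈ s, f i ^ 2) * (∑ i ∈ s, h i ^ 2) :=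
          Finset.sum_mul_sq_le_sq_mul_sq s f h
      _ ≤ (∑' i, f i ^ 2) * (∑' i, h i ^ 2) := by
          apply mul_le_mul
          · exact Summable.sum_le_tsum s (fun i _ => sq_nonneg _) sf
          · exact Summable.sum_le_tsum s (fun i _ => sq_nonneg _) sh
          · exact Finset.sum_nonneg fun i _ => sq_nonneg _
          · exact tsum_nonneg fun i => sq_nonneg _
  have h1 : ∑' i, f i * h i ≤ Real.sqrt ((∑' i, f i ^ 2) * (∑' i, h i ^ 2)) :=
    Summable.tsum_le_of_sum_le sfh key
  calc (∑' i, f i * h i) ^ 2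
      ≤ Real.sqrt ((∑' i, f i ^ 2) * (∑' i, h i ^ 2)) ^ 2 :=
        pow_le_pow_left₀ (tsum_nonneg fun i => mul_nonneg (hf i) (hh i)) h1 2
    _ = _ := Real.sq_sqrt hM0

/-- **Schur-test boundedness on the dyadic bi-tree.** For `A` sufficiently large the matrix
`m` defines a bounded operator on `ℓ²` of the dyadic rectangles. -/
theorem stmt2 :
    ∃ A₀ : ℝ, 0 < A₀ ∧ ∀ A : ℝ, A₀ ≤ A →
      ∃ C : ℝ, 0 < C ∧ ∀ a : UDI × UDI → ℝ, Summable (fun R => (a R) ^ 2) →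
        (∀ R : UDI × UDI, Summable fun R' => schurMatR A R R' * a R') ∧
        Summable (fun R => (∑' R', schurMatR A R R' * a R') ^ 2) ∧
        ∑' R, (∑' R', schurMatR A R R' * a R') ^ 2 ≤ C ^ 2 * ∑' R, (a R) ^ 2 := by
  refine ⟨2, two_pos, fun A hA => ⟨16, by norm_num, fun a ha => ?_⟩⟩
  have hA0 : (0:ℝ) ≤ A := le_trans (by norm_num) hA
  have hmn : ∀ R R', 0 ≤ schurMatR A R R' := schur_nonneg A
  have hm1 : ∀ R R', schurMatR A R R' ≤ 1 := schur_le_one hA0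
  have hrow_top : ∀ R, (∑' R', ENNReal.ofReal (schurMatR A R R')) ≠ ⊤ := fun R =>
    ne_top_of_le_ne_top (by norm_num) (schur_row_ennreal hA R)
  have hrow_sum : ∀ R, Summable fun R' => schurMatR A R R' := by
    intro R
    exact (ENNReal.summable_toReal (hrow_top R)).congr fun R' =>
      ENNReal.toReal_ofReal (hmn R R')
  have hrow_le : ∀ R, (∑' R', schurMatR A R R') ≤ 16 := by
    intro R
    have h1 : (∑' R', ENNReal.ofReal (schurMatR A R R')).toReal
        = ∑' R', schurMatR A R R' := by
      rw [ENNReal.tsum_toReal_eq (fun _ => ENNReal.ofReal_ne_top)]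
      exact tsum_congr fun R' => ENNReal.toReal_ofReal (hmn R R')
    rw [← h1]
    calc _ ≤ (16 : ℝ≥0∞).toReal := ENNReal.toReal_mono (by norm_num) (schur_row_ennreal hA R)
      _ = 16 := by norm_num
  have hprod : ∀ R R', |schurMatR A R R' * a R'| ≤ schurMatR A R R' + a R' ^ 2 := by
    intro R R'
    rw [abs_mul, abs_of_nonneg (hmn R R')]
    rcases le_total |a R'| 1 with hle | hle
    · calc schurMatR A R R' * |a R'| ≤ schurMatR A R R' * 1 :=
          mul_le_mul_of_nonneg_left hle (hmn R R')
        _ = schurMatR A R R' := mul_one _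
        _ ≤ _ := le_add_of_nonneg_right (sq_nonneg _)
    · calc schurMatR A R R' * |a R'| ≤ 1 * |a R'| :=
          mul_le_mul_of_nonneg_right (hm1 R R') (abs_nonneg _)
        _ = |a R'| := one_mul _
        _ ≤ |a R'| ^ 2 := le_self_pow₀ hle two_ne_zero
        _ = a R' ^ 2 := sq_abs _
        _ ≤ _ := le_add_of_nonneg_left (hmn R R')
  have habs_sum : ∀ R, Summable fun R' => schurMatR A R R' * |a R'| := by
    intro R
    apply Summable.of_nonneg_of_le (fun R' => mul_nonneg (hmn R R') (abs_nonneg _))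
      (fun R' => ?_) ((hrow_sum R).add ha)
    have h := hprod R R'
    rwa [abs_mul, abs_of_nonneg (hmn R R')] at h
  have hTsummable : ∀ R, Summable fun R' => schurMatR A R R' * a R' := by
    intro R
    rw [← summable_abs_iff]
    exact Summable.of_nonneg_of_le (fun _ => abs_nonneg _) (hprod R) ((hrow_sum R).add ha)
  have hma2 : ∀ R, Summable fun R' => schurMatR A R R' * a R' ^ 2 := by
    intro R
    apply Summable.of_nonneg_of_le (fun R' => mul_nonneg (hmn R R') (sq_nonneg _))
      (fun R' => ?_) ha
    calc schurMatR A R R' * a R' ^ 2 ≤ 1 * a R' ^ 2 :=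
        mul_le_mul_of_nonneg_right (hm1 R R') (sq_nonneg _)
      _ = a R' ^ 2 := one_mul _
  have hkey : ∀ R, (∑' R', schurMatR A R R' * a R') ^ 2
      ≤ 16 * ∑' R', schurMatR A R R' * a R' ^ 2 := by
    intro R
    have h0 : Summable fun R' => ‖schurMatR A R R' * a R'‖ :=
      (habs_sum R).congr fun R' => by
        rw [Real.norm_eq_abs, abs_mul, abs_of_nonneg (hmn R R')]
    have habs : |∑' R', schurMatR A R R' * a R'| ≤ ∑' R', schurMatR A R R' * |a R'| := by
      calc |∑' R', schurMatR A R R' * a R'|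
          = ‖∑' R', schurMatR A R R' * a R'‖ := (Real.norm_eq_abs _).symm
        _ ≤ ∑' R', ‖schurMatR A R R' * a R'‖ := norm_tsum_le_tsum_norm h0
        _ = ∑' R', schurMatR A R R' * |a R'| := tsum_congr fun R' => by
            rw [Real.norm_eq_abs, abs_mul, abs_of_nonneg (hmn R R')]
    have e1 : ∀ R', Real.sqrt (schurMatR A R R') * (Real.sqrt (schurMatR A R R') * |a R'|)
        = schurMatR A R R' * |a R'| := fun R' => by
      rw [← mul_assoc, Real.mul_self_sqrt (hmn R R')]
    have e2 : ∀ R', Real.sqrt (schurMatR A R R') ^ 2 = schurMatR A R R' := fun R' =>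
      Real.sq_sqrt (hmn R R')
    have e3 : ∀ R', (Real.sqrt (schurMatR A R R') * |a R'|) ^ 2
        = schurMatR A R R' * a R' ^ 2 := fun R' => by
      rw [mul_pow, Real.sq_sqrt (hmn R R'), sq_abs]
    have hcs := tsum_cs (f := fun R' => Real.sqrt (schurMatR A R R'))
      (h := fun R' => Real.sqrt (schurMatR A R R') * |a R'|)
      (fun R' => Real.sqrt_nonneg _)
      (fun R' => mul_nonneg (Real.sqrt_nonneg _) (abs_nonneg _))
      ((hrow_sum R).congr fun R' => (e2 R').symm)
      ((hma2 R).congr fun R' => (e3 R').symm)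
      ((habs_sum R).congr fun R' => (e1 R').symm)
    simp only [e1, e2, e3] at hcs
    calc (∑' R', schurMatR A R R' * a R') ^ 2
        = |∑' R', schurMatR A R R' * a R'| ^ 2 := (sq_abs _).symm
      _ ≤ (∑' R', schurMatR A R R' * |a R'|) ^ 2 :=
          pow_le_pow_left₀ (abs_nonneg _) habs 2
      _ ≤ (∑' R', schurMatR A R R') * (∑' R', schurMatR A R R' * a R' ^ 2) := hcs
      _ ≤ 16 * (∑' R', schurMatR A R R' * a R' ^ 2) :=
          mul_le_mul_of_nonneg_right (hrow_le R)
            (tsum_nonneg fun R' => mul_nonneg (hmn R R') (sq_nonneg _))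
  set F : (UDI × UDI) → ℝ≥0∞ :=
    fun R => ∑' R', ENNReal.ofReal (schurMatR A R R' * a R' ^ 2) with hF
  have hFval : ∀ R, F R = ENNReal.ofReal (∑' R', schurMatR A R R' * a R' ^ 2) := fun R =>
    (ENNReal.ofReal_tsum_of_nonneg (fun R' => mul_nonneg (hmn R R') (sq_nonneg _))
      (hma2 R)).symm
  have hFne : ∀ R, F R ≠ ⊤ := fun R => by rw [hFval R]; exact ENNReal.ofReal_ne_top
  have hFtoReal : ∀ R, (F R).toReal = ∑' R', schurMatR A R R' * a R' ^ 2 := fun R => by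
    rw [hFval R]
    exact ENNReal.toReal_ofReal (tsum_nonneg fun R' => mul_nonneg (hmn R R') (sq_nonneg _))
  have hFsum : (∑' R, F R) ≤ 16 * ENNReal.ofReal (∑' R, a R ^ 2) := by
    calc ∑' R, F R
        = ∑' R', ∑' R, ENNReal.ofReal (schurMatR A R R' * a R' ^ 2) := ENNReal.tsum_comm
      _ = ∑' R', (∑' R, ENNReal.ofReal (schurMatR A R R')) * ENNReal.ofReal (a R' ^ 2) := by
          apply tsum_congr; intro R'
          rw [← ENNReal.tsum_mul_right]
          exact tsum_congr fun R => by rw [ENNReal.ofReal_mul (hmn R R')]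
      _ ≤ ∑' R', 16 * ENNReal.ofReal (a R' ^ 2) := by
          apply ENNReal.tsum_le_tsum; intro R'
          apply mul_le_mul_left
          calc ∑' R, ENNReal.ofReal (schurMatR A R R')
              = ∑' R, ENNReal.ofReal (schurMatR A R' R) := tsum_congr fun R => by
                rw [schur_symm]
            _ ≤ 16 := schur_row_ennreal hA R'
      _ = 16 * ∑' R', ENNReal.ofReal (a R' ^ 2) := ENNReal.tsum_mul_left
      _ = 16 * ENNReal.ofReal (∑' R, a R ^ 2) := by
          rw [ENNReal.ofReal_tsum_of_nonneg (fun _ => sq_nonneg _) ha]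
  have hFsum_ne : (∑' R, F R) ≠ ⊤ :=
    ne_top_of_le_ne_top (ENNReal.mul_ne_top (by norm_num) ENNReal.ofReal_ne_top) hFsum
  have hWsummable : Summable fun R => (F R).toReal := ENNReal.summable_toReal hFsum_ne
  have hTsq : Summable fun R => (∑' R', schurMatR A R R' * a R') ^ 2 := by
    apply Summable.of_nonneg_of_le (fun R => sq_nonneg _) (fun R => ?_)
      (hWsummable.mul_left 16)
    calc (∑' R', schurMatR A R R' * a R') ^ 2
        ≤ 16 * ∑' R', schurMatR A R R' * a R' ^ 2 := hkey R
      _ = 16 * (F R).toReal := by rw [hFtoReal R]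
  refine ⟨hTsummable, hTsq, ?_⟩
  calc ∑' R, (∑' R', schurMatR A R R' * a R') ^ 2
      ≤ ∑' R, 16 * (F R).toReal := by
        apply Summable.tsum_le_tsum (fun R => ?_) hTsq (hWsummable.mul_left 16)
        calc (∑' R', schurMatR A R R' * a R') ^ 2
            ≤ 16 * ∑' R', schurMatR A R R' * a R' ^ 2 := hkey R
          _ = 16 * (F R).toReal := by rw [hFtoReal R]
    _ = 16 * ∑' R, (F R).toReal := tsum_mul_left
    _ = 16 * (∑' R, F R).toReal := by rw [ENNReal.tsum_toReal_eq hFne]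
    _ ≤ 16 * (16 * ENNReal.ofReal (∑' R, a R ^ 2)).toReal := by
        apply mul_le_mul_of_nonneg_left _ (by norm_num)
        exact ENNReal.toReal_mono
          (ENNReal.mul_ne_top (by norm_num) ENNReal.ofReal_ne_top) hFsum
    _ = (16 : ℝ) ^ 2 * ∑' R, a R ^ 2 := by
        rw [ENNReal.toReal_mul, ENNReal.toReal_ofReal (tsum_nonneg fun _ => sq_nonneg _)]
        norm_num
        ring
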